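/- arXiv:1906.04936 — 2 statements merged into one kernel-verified Lean document; each statement's English description precedes it below -/
import Mathlib

section
/- For any bounded random variable X with values in [m, M], Var(X) ≤ (M − E[X])(E[X] − m) (the Bhatia–Davis inequality), with equality if and only if X is supported on {m, M}. -/
open MeasureTheory ProbabilityTheory

/-- The Bhatia–Davis inequality, with equality iff the random variable is
supported on the endpoints. -/
theorem bhatia_davis {Ω : Type*} [MeasureSpace Ω]
    [IsProbabilityMeasure (ℙ : Measure Ω)]
    (X : Ω → ℝ) (hX : Measurable X) (m M : ℝ)
    (hbdd : ∀ᵐ ω ∂ℙ, X ω ∈ Set.Icc m M) :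
    variance X ℙ ≤ (M - ∫ ω, X ω ∂ℙ) * ((∫ ω, X ω ∂ℙ) - m) ∧
    (variance X ℙ = (M - ∫ ω, X ω ∂ℙ) * ((∫ ω, X ω ∂ℙ) - m) ↔
      ∀ᵐ ω ∂ℙ, X ω = m ∨ X ω = M) := by
  set μ := ∫ ω, X ω ∂ℙ with hμ
  have hC : ∀ᵐ ω ∂ℙ, ‖X ω‖ ≤ max |m| |M| := by
    filter_upwards [hbdd] with ω hω
    rw [Real.norm_eq_abs, abs_le]
    constructor
    · calc -(max |m| |M|) ≤ -|m| := by simp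
        _ ≤ m := neg_abs_le m
        _ ≤ X ω := hω.1
    · calc X ω ≤ M := hω.2
        _ ≤ |M| := le_abs_self M
        _ ≤ max |m| |M| := le_max_right _ _
  have h2 : MemLp X 2 ℙ :=
    MemLp.of_bound hX.aestronglyMeasurable _ hC
  have hint : Integrable X ℙ := h2.integrable (by norm_num)
  have hintsq : Integrable (fun ω => X ω ^ 2) ℙ := by
    have := h2.integrable_sq
    simpa [sq] using this
  have hintf : Integrable (fun ω => (M - X ω) * (X ω - m)) ℙ := by
    have : (fun ω => (M - X ω) * (X ω - m)) =
        fun ω => -(X ω ^ 2) + (M + m) * X ω + (-(M * m)) := by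
      funext ω; ring
    rw [this]
    exact ((hintsq.neg.add (hint.const_mul _)).add (integrable_const _))
  have hvar : variance X ℙ = (∫ ω, X ω ^ 2 ∂ℙ) - μ ^ 2 := by
    simpa [hμ] using variance_eq_sub h2
  have hkey : ∫ ω, (M - X ω) * (X ω - m) ∂ℙ =
      (M - μ) * (μ - m) - variance X ℙ := by
    have hexp : (fun ω => (M - X ω) * (X ω - m)) =
        fun ω => -(X ω ^ 2) + (M + m) * X ω + (-(M * m)) := by
      funext ω; ring
    have e1 : ∫ ω, (-(X ω ^ 2) + (M + m) * X ω + (-(M * m))) ∂ℙ =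
        (∫ ω, (-(X ω ^ 2) + (M + m) * X ω) ∂ℙ) + ∫ _ω, (-(M * m) : ℝ) ∂ℙ :=
      integral_add (hintsq.neg.add (hint.const_mul _)) (integrable_const _)
    have e2 : ∫ ω, (-(X ω ^ 2) + (M + m) * X ω) ∂ℙ =
        (∫ ω, -(X ω ^ 2) ∂ℙ) + ∫ ω, (M + m) * X ω ∂ℙ :=
      integral_add hintsq.neg (hint.const_mul _)
    rw [hexp, e1, e2, integral_neg, MeasureTheory.integral_const_mul, integral_const, hvar]
    simp only [measure_univ, probReal_univ, ENNReal.toReal_one, smul_eq_mul, one_mul]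
    ring
  have hnonneg : ∀ᵐ ω ∂ℙ, 0 ≤ (M - X ω) * (X ω - m) := by
    filter_upwards [hbdd] with ω hω
    exact mul_nonneg (by linarith [hω.2]) (by linarith [hω.1])
  have hle : 0 ≤ ∫ ω, (M - X ω) * (X ω - m) ∂ℙ := integral_nonneg_of_ae hnonneg
  constructor
  · linarith [hkey ▸ hle]
  · rw [show (variance X ℙ = (M - μ) * (μ - m)) ↔
        (∫ ω, (M - X ω) * (X ω - m) ∂ℙ = 0) by rw [hkey]; constructor <;> intro h <;> linarith]
    rw [integral_eq_zero_iff_of_nonneg_ae hnonneg hintf]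
    constructor
    · intro h
      filter_upwards [h.le, hbdd] with ω hω hω'
      rcases mul_eq_zero.1 (le_antisymm hω (by
        exact mul_nonneg (by linarith [hω'.2]) (by linarith [hω'.1]))) with h1 | h1
      · right; linarith
      · left; linarith
    · intro h
      filter_upwards [h] with ω hω
      rcases hω with h1 | h1 <;> simp [h1]
end

section
/- The directional Relative Hausdorff distance is not symmetric and the Relative Hausdorff distance RH(F,G) = max(ℛℋ(F,G), ℛℋ(G,F)) does not satisfy the triangle inequality: there exist graphs (equivalently, nonincreasing step functions serving as ccdhs) F, G, H with RH(F,H) > RH(F,G) + RH(G,H). -/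
/-- `RHdirOK f g Δf Δg ε` : the directional RH condition with tolerance `ε`
between ccdhs `f` (max degree `Δf`) and `g` (max degree `Δg`). -/
def RHdirOK (f g : ℕ → ℕ) (Δf Δg : ℕ) (ε : ℝ) : Prop :=
  ∀ d ∈ Finset.Icc 1 Δf, ∃ d' ∈ Finset.Icc 1 (Δg + 1),
    |(d : ℝ) - (d' : ℝ)| ≤ ε * d ∧ |(f d : ℝ) - (g d' : ℝ)| ≤ ε * f d

/-- The directional Relative Hausdorff distance. -/
noncomputable def RHdir (f g : ℕ → ℕ) (Δf Δg : ℕ) : ℝ :=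
  sInf {ε : ℝ | 0 ≤ ε ∧ RHdirOK f g Δf Δg ε}

/-- The Relative Hausdorff distance. -/
noncomputable def RHdist (f g : ℕ → ℕ) (Δf Δg : ℕ) : ℝ :=
  max (RHdir f g Δf Δg) (RHdir g f Δg Δf)

/-- `f` is a ccdh with maximum degree `Δ`: a nonincreasing sequence, positive
at `Δ` and vanishing beyond `Δ`. -/
def IsCcdh (f : ℕ → ℕ) (Δ : ℕ) : Prop :=
  (∀ k, f (k + 1) ≤ f k) ∧ (∀ k, Δ < k → f k = 0) ∧ 0 < f Δ

/-! ### Auxiliary: explicit examples -/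

def ff : ℕ → ℕ := fun k => if k ≤ 1 then 1 else 0
def gg : ℕ → ℕ := fun k => if k ≤ 1 then 3 else 0
def hh : ℕ → ℕ := fun k => if k ≤ 3 then 4 else 0

lemma ff_ccdh : IsCcdh ff 1 :=
  ⟨fun k => by unfold ff; split_ifs <;> omega,
   fun k hk => by unfold ff; split_ifs <;> omega,
   by norm_num [ff]⟩

lemma gg_ccdh : IsCcdh gg 1 :=
  ⟨fun k => by unfold gg; split_ifs <;> omega,
   fun k hk => by unfold gg; split_ifs <;> omega,
   by norm_num [gg]⟩

lemma hh_ccdh : IsCcdh hh 3 :=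
  ⟨fun k => by unfold hh; split_ifs <;> omega,
   fun k hk => by unfold hh; split_ifs <;> omega,
   by norm_num [hh]⟩

lemma rhdir_le (f g : ℕ → ℕ) (Δf Δg : ℕ) (c : ℝ) (h0 : 0 ≤ c)
    (h : RHdirOK f g Δf Δg c) : RHdir f g Δf Δg ≤ c :=
  csInf_le ⟨0, fun _ hx => hx.1⟩ ⟨h0, h⟩

lemma rhdir_ge (f g : ℕ → ℕ) (Δf Δg : ℕ) (c ε₀ : ℝ) (h0 : 0 ≤ ε₀)
    (hok : RHdirOK f g Δf Δg ε₀)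
    (h : ∀ ε : ℝ, 0 ≤ ε → RHdirOK f g Δf Δg ε → c ≤ ε) :
    c ≤ RHdir f g Δf Δg :=
  le_csInf ⟨ε₀, h0, hok⟩ (fun ε hε => h ε hε.1 hε.2)

lemma ok_fg : RHdirOK ff gg 1 1 1 := by
  intro d hd
  rw [Finset.mem_Icc] at hd; obtain ⟨ha, hb⟩ := hd
  interval_cases d
  exact ⟨2, by simp, by norm_num [ff, gg]⟩

lemma ge_fg : ∀ ε : ℝ, 0 ≤ ε → RHdirOK ff gg 1 1 ε → 1 ≤ ε := by
  intro ε h0 H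
  obtain ⟨d', hd', h1, h2⟩ := H 1 (by simp)
  rw [Finset.mem_Icc] at hd'; obtain ⟨ha, hb⟩ := hd'
  interval_cases d' <;> norm_num [ff, gg] at h1 h2 <;> linarith

lemma ok_gf : RHdirOK gg ff 1 1 (2/3) := by
  intro d hd
  rw [Finset.mem_Icc] at hd; obtain ⟨ha, hb⟩ := hd
  interval_cases d
  exact ⟨1, by simp, by norm_num [ff, gg]⟩

lemma ge_gf : ∀ ε : ℝ, 0 ≤ ε → RHdirOK gg ff 1 1 ε → 2/3 ≤ ε := by
  intro ε h0 H
  obtain ⟨d', hd', h1, h2⟩ := H 1 (by simp)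
  rw [Finset.mem_Icc] at hd'; obtain ⟨ha, hb⟩ := hd'
  interval_cases d' <;> norm_num [ff, gg] at h1 h2 <;> linarith

lemma rhdir_fg : RHdir ff gg 1 1 = 1 :=
  le_antisymm (rhdir_le _ _ _ _ _ (by norm_num) ok_fg)
    (rhdir_ge _ _ _ _ _ 1 (by norm_num) ok_fg ge_fg)

lemma rhdir_gf : RHdir gg ff 1 1 = 2/3 :=
  le_antisymm (rhdir_le _ _ _ _ _ (by norm_num) ok_gf)
    (rhdir_ge _ _ _ _ _ (2/3) (by norm_num) ok_gf ge_gf)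

lemma ok_gf1 : RHdirOK gg ff 1 1 1 := by
  intro d hd
  rw [Finset.mem_Icc] at hd; obtain ⟨ha, hb⟩ := hd
  interval_cases d
  exact ⟨1, by simp, by norm_num [ff, gg]⟩

lemma ok_gh : RHdirOK gg hh 1 3 (2/3) := by
  intro d hd
  rw [Finset.mem_Icc] at hd; obtain ⟨ha, hb⟩ := hd
  interval_cases d
  exact ⟨1, by simp, by norm_num [gg, hh]⟩

lemma ok_hg : RHdirOK hh gg 3 1 (2/3) := by
  intro d hd
  rw [Finset.mem_Icc] at hd; obtain ⟨ha, hb⟩ := hd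
  interval_cases d
  · exact ⟨1, by simp, by norm_num [gg, hh]⟩
  · exact ⟨1, by simp, by norm_num [gg, hh]⟩
  · exact ⟨1, by simp, by norm_num [gg, hh]⟩

lemma ok_fh3 : RHdirOK ff hh 1 3 3 := by
  intro d hd
  rw [Finset.mem_Icc] at hd; obtain ⟨ha, hb⟩ := hd
  interval_cases d
  exact ⟨1, by simp, by norm_num [ff, hh]⟩

lemma ge_fh : ∀ ε : ℝ, 0 ≤ ε → RHdirOK ff hh 1 3 ε → 3 ≤ ε := by
  intro ε h0 H
  obtain ⟨d', hd', h1, h2⟩ := H 1 (by simp)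
  rw [Finset.mem_Icc] at hd'; obtain ⟨ha, hb⟩ := hd'
  interval_cases d' <;> norm_num [ff, hh] at h1 h2 <;> linarith

/-- The directional RH distance is not symmetric, and the RH distance fails
the triangle inequality. -/
theorem rh_not_symmetric_and_no_triangle :
    (∃ (f g : ℕ → ℕ) (Δf Δg : ℕ), IsCcdh f Δf ∧ IsCcdh g Δg ∧
      RHdir f g Δf Δg ≠ RHdir g f Δg Δf) ∧
    (∃ (f g h : ℕ → ℕ) (Δf Δg Δh : ℕ),
      IsCcdh f Δf ∧ IsCcdh g Δg ∧ IsCcdh h Δh ∧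
      RHdist f h Δf Δh > RHdist f g Δf Δg + RHdist g h Δg Δh) := by
  constructor
  · exact ⟨ff, gg, 1, 1, ff_ccdh, gg_ccdh, by rw [rhdir_fg, rhdir_gf]; norm_num⟩
  · refine ⟨ff, gg, hh, 1, 1, 3, ff_ccdh, gg_ccdh, hh_ccdh, ?_⟩
    have h1 : RHdist ff gg 1 1 ≤ 1 :=
      max_le (rhdir_le _ _ _ _ _ (by norm_num) ok_fg)
        (rhdir_le _ _ _ _ _ (by norm_num) ok_gf1)
    have h2 : RHdist gg hh 1 3 ≤ 2/3 :=
      max_le (rhdir_le _ _ _ _ _ (by norm_num) ok_gh)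
        (rhdir_le _ _ _ _ _ (by norm_num) ok_hg)
    have h3 : (3 : ℝ) ≤ RHdist ff hh 1 3 :=
      le_max_of_le_left (rhdir_ge _ _ _ _ _ 3 (by norm_num) ok_fh3 ge_fh)
    linarith
end
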